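/- For every λ with 0 < λ < 1 and every k with 0 < k < 1, the series Σ_{m=0}^∞ (λ^{2m+1}/(2m+1)) · F_m(1−k²) converges and its sum equals F(λ,k), where F_m(x) = Σ_{j=0}^m ((−m)_j (1/2)_j / ((1)_j j!)) x^j. -/

import Mathlib

open Real Finset

noncomputable def poch (a : ℝ) (n : ℕ) : ℝ := ∏ i ∈ Finset.range n, (a + i)

noncomputable def F2F1 (m : ℕ) (x : ℝ) : ℝ :=
  ∑ j ∈ Finset.range (m + 1),
    poch (-(m : ℝ)) j * poch (1/2) j / (poch 1 j * (Nat.factorial j : ℝ)) * x ^ j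

namespace Stmt10

noncomputable def aa (n : ℕ) : ℝ := (Nat.centralBinom n : ℝ) / 4 ^ n

lemma aa_pos (n : ℕ) : 0 < aa n :=
  div_pos (by exact_mod_cast Nat.centralBinom_pos n) (by positivity)

lemma aa_zero : aa 0 = 1 := by simp [aa, Nat.centralBinom]

lemma aa_succ (n : ℕ) : aa (n + 1) = (2 * n + 1) / (2 * n + 2) * aa n := by
  have h := Nat.succ_mul_centralBinom_succ n
  have h' : ((n : ℝ) + 1) * (Nat.centralBinom (n + 1) : ℝ)
      = 2 * (2 * n + 1) * (Nat.centralBinom n : ℝ) := by exact_mod_cast h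
  have h4 : (4 : ℝ) ^ (n + 1) = 4 * 4 ^ n := by ring
  unfold aa
  rw [h4]
  field_simp
  nlinarith [h', pow_pos (show (0:ℝ) < 4 by norm_num) n]

lemma aa_le_one (n : ℕ) : aa n ≤ 1 := by
  induction n with
  | zero => simp [aa_zero]
  | succ n ih =>
    rw [aa_succ]
    have h1 : (2 * (n:ℝ) + 1) / (2 * n + 2) ≤ 1 := by
      rw [div_le_one (by positivity)]; linarith
    have := aa_pos n
    nlinarith

lemma poch_succ (a : ℝ) (n : ℕ) : poch a (n + 1) = poch a n * (a + n) := by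
  simp [poch, Finset.prod_range_succ]

lemma poch_one (n : ℕ) : poch 1 n = (Nat.factorial n : ℝ) := by
  induction n with
  | zero => simp [poch]
  | succ n ih => rw [poch_succ, ih, Nat.factorial_succ]; push_cast; ring

lemma poch_half (n : ℕ) : poch (1/2) n = aa n * (Nat.factorial n : ℝ) := by
  induction n with
  | zero => simp [poch, aa_zero]
  | succ n ih =>
    rw [poch_succ, ih, aa_succ, Nat.factorial_succ]
    push_cast
    field_simp
    ring

lemma poch_neg (m j : ℕ) (h : j ≤ m) :
    poch (-(m : ℝ)) j = (-1) ^ j * (m.choose j : ℝ) * (Nat.factorial j : ℝ) := by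
  induction j with
  | zero => simp [poch]
  | succ j ih =>
    have hj : j ≤ m := Nat.le_of_succ_le h
    rw [poch_succ, ih hj, Nat.factorial_succ]
    have hc : (m.choose (j+1) : ℝ) * (j+1) = (m.choose j : ℝ) * ((m : ℝ) - j) := by
      have := Nat.choose_succ_right_eq m j
      have hcast : ((m - j : ℕ) : ℝ) = (m : ℝ) - j := by
        rw [Nat.cast_sub hj]
      calc (m.choose (j+1) : ℝ) * (j+1) = ((m.choose (j+1) * (j+1) : ℕ) : ℝ) := by push_cast; ring
        _ = ((m.choose j * (m - j) : ℕ) : ℝ) := by rw [this]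
        _ = (m.choose j : ℝ) * ((m:ℝ) - j) := by push_cast [Nat.cast_sub hj]; ring
    push_cast
    push_cast at hc
    linear_combination ((-1:ℝ)^j * (Nat.factorial j : ℝ)) * hc

lemma F2F1_term (m j : ℕ) (h : j ≤ m) (x : ℝ) :
    poch (-(m : ℝ)) j * poch (1/2) j / (poch 1 j * (Nat.factorial j : ℝ)) * x ^ j
      = (-1) ^ j * (m.choose j : ℝ) * aa j * x ^ j := by
  rw [poch_neg m j h, poch_half, poch_one]
  have hf : (Nat.factorial j : ℝ) ≠ 0 := by exact_mod_cast Nat.factorial_ne_zero j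
  field_simp

noncomputable def S (n i : ℕ) : ℝ := ∑ s ∈ Finset.range (n + 1), (-1) ^ s * ((n.choose s) : ℝ) * aa (i + s)

lemma S_succ (n i : ℕ) : S (n + 1) i = S n i - S n (i + 1) := by
  have h1 : ∀ s, ((n+1).choose (s+1) : ℝ) = (n.choose s : ℝ) + (n.choose (s+1) : ℝ) := by
    intro s; exact_mod_cast Nat.choose_succ_succ' n s
  set T : ℝ := ∑ s ∈ Finset.range (n+1),
      (-1:ℝ) ^ (s+1) * ((n.choose (s+1)) : ℝ) * aa (i + (s+1)) with hTdef
  have c2 : S n i = T + aa i := by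
    unfold S
    rw [Finset.sum_range_succ' (fun s => (-1:ℝ) ^ s * ((n.choose s) : ℝ) * aa (i + s)) n]
    rw [hTdef, Finset.sum_range_succ]
    simp [Nat.choose_succ_self]
  have c1 : S (n+1) i = T - S n (i+1) + aa i := by
    unfold S
    rw [Finset.sum_range_succ' (fun s => (-1:ℝ) ^ s * (((n+1).choose s) : ℝ) * aa (i + s)) (n+1)]
    have hsplit : ∀ s ∈ Finset.range (n+1),
        (-1:ℝ) ^ (s+1) * (((n+1).choose (s+1)) : ℝ) * aa (i + (s+1))
        = ((-1:ℝ) ^ (s+1) * ((n.choose (s+1)) : ℝ) * aa (i + (s+1)))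
          - ((-1:ℝ) ^ s * ((n.choose s) : ℝ) * aa ((i+1) + s)) := by
      intro s _
      rw [h1 s]
      have he : i + (s + 1) = (i + 1) + s := by ring
      rw [he]
      ring
    rw [Finset.sum_congr rfl hsplit, Finset.sum_sub_distrib]
    simp only [← hTdef]
    simp [S]
  rw [c1, c2]
  ring

lemma S_eq (n : ℕ) : ∀ i, S n i = aa i * aa n / (((n + i).choose i) : ℝ) := by
  induction n with
  | zero =>
    intro i
    simp [S, aa_zero]
  | succ n ih =>
    intro i
    have hA : (0:ℝ) < (((n + i).choose i) : ℝ) := by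
      exact_mod_cast Nat.choose_pos (Nat.le_add_left i n)
    have hB : (0:ℝ) < (((n + (i+1)).choose (i+1)) : ℝ) := by
      exact_mod_cast Nat.choose_pos (Nat.le_add_left (i+1) n)
    have hC : (0:ℝ) < (((n + 1 + i).choose i) : ℝ) := by
      exact_mod_cast Nat.choose_pos (le_trans (Nat.le_add_left i n) (by omega : n + i ≤ n + 1 + i))
    -- identities
    have e1 : ((n + i + 1 : ℕ) : ℝ) * ((n+i).choose i : ℝ) = (((n+i+1).choose (i+1)) : ℝ) * ((i:ℝ)+1) := by
      exact_mod_cast Nat.add_one_mul_choose_eq (n+i) i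
    have e2 : ((n + i + 1 : ℕ) : ℝ) * ((n+i).choose n : ℝ) = (((n+i+1).choose (n+1)) : ℝ) * ((n:ℝ)+1) := by
      exact_mod_cast Nat.add_one_mul_choose_eq (n+i) n
    have esymm1 : (n+i).choose n = (n+i).choose i := by
      have := Nat.choose_symm (Nat.le_add_left i n)
      simpa using this
    have esymm2 : (n+i+1).choose (n+1) = (n+i+1).choose i := by
      have := Nat.choose_symm (by omega : n+1 ≤ n+i+1)
      rw [show n+i+1-(n+1) = i by omega] at this
      exact this.symm
    have hBval : (((n + (i+1)).choose (i+1)) : ℝ)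
        = ((n:ℝ)+i+1) * (((n + i).choose i) : ℝ) / ((i:ℝ)+1) := by
      have h : n + (i+1) = n+i+1 := by omega
      rw [h]
      rw [eq_div_iff (by positivity : ((i:ℝ)+1) ≠ 0)]
      push_cast at e1 ⊢
      linarith [e1]
    have hCval : (((n + 1 + i).choose i) : ℝ)
        = ((n:ℝ)+i+1) * (((n + i).choose i) : ℝ) / ((n:ℝ)+1) := by
      have h : n + 1 + i = n+i+1 := by omega
      rw [h, ← esymm2]
      rw [eq_div_iff (by positivity : ((n:ℝ)+1) ≠ 0)]
      rw [esymm1] at e2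
      push_cast at e2 ⊢
      linarith [e2]
    rw [S_succ, ih i, ih (i+1), hBval, hCval, aa_succ n, aa_succ i]
    have h1 : ((i:ℝ)+1) ≠ 0 := by positivity
    have h2 : ((n:ℝ)+1) ≠ 0 := by positivity
    have h3 : ((n:ℝ)+i+1) ≠ 0 := by positivity
    have h4 : (((n + i).choose i) : ℝ) ≠ 0 := ne_of_gt hA
    field_simp
    ring

lemma F2F1_expand (m : ℕ) (x : ℝ) :
    F2F1 m x = ∑ j ∈ Finset.range (m+1), (-1)^j * (m.choose j : ℝ) * aa j * x ^ j := by
  unfold F2F1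
  refine Finset.sum_congr rfl fun j hj => ?_
  exact F2F1_term m j (Nat.lt_succ_iff.mp (Finset.mem_range.mp hj)) x

lemma F2F1_eq (m : ℕ) (y : ℝ) :
    F2F1 m (1 - y) = ∑ i ∈ Finset.range (m+1), aa i * aa (m - i) * y ^ (m - i) := by
  rw [F2F1_expand]
  have hext : ∀ j ∈ Finset.range (m+1), (-1:ℝ)^j * (m.choose j:ℝ) * aa j * (1-y)^j
      = ∑ i ∈ Finset.range (m+1),
          (-1:ℝ)^j * (m.choose j:ℝ) * aa j * ((j.choose i : ℝ) * (-y)^i) := by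
    intro j hj
    have hj' : j ≤ m := Nat.lt_succ_iff.mp (Finset.mem_range.mp hj)
    have hpow : (1 - y) ^ j = ∑ i ∈ Finset.range (j+1), (j.choose i : ℝ) * (-y)^i := by
      rw [sub_eq_add_neg, add_comm, add_pow]
      refine Finset.sum_congr rfl fun i hi => ?_
      ring
    rw [hpow, Finset.mul_sum]
    apply Finset.sum_subset
    · exact Finset.range_subset_range.mpr (by omega)
    · intro i hi hni
      have : j < i := by
        simp only [Finset.mem_range] at hi hni; omega
      simp [Nat.choose_eq_zero_of_lt this]
  rw [Finset.sum_congr rfl hext, Finset.sum_comm]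
  rw [← Finset.sum_range_reflect (fun i => aa i * aa (m - i) * y ^ (m - i)) (m+1)]
  refine Finset.sum_congr rfl fun i hi => ?_
  have hi' : i ≤ m := Nat.lt_succ_iff.mp (Finset.mem_range.mp hi)
  simp only [Nat.add_sub_cancel]
  have hmm : m - (m - i) = i := by omega
  rw [hmm]
  -- inner sum over j
  have hrestrict : ∑ j ∈ Finset.range (m+1),
      (-1:ℝ)^j * (m.choose j:ℝ) * aa j * ((j.choose i : ℝ) * (-y)^i)
      = ∑ j ∈ Finset.Ico i (m+1),
      (-1:ℝ)^j * (m.choose j:ℝ) * aa j * ((j.choose i : ℝ) * (-y)^i) := by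
    symm
    apply Finset.sum_subset
    · intro j hj
      simp only [Finset.mem_Ico] at hj
      exact Finset.mem_range.mpr hj.2
    · intro j hj hnj
      have : j < i := by
        simp only [Finset.mem_range] at hj
        simp only [Finset.mem_Ico] at hnj
        omega
      simp [Nat.choose_eq_zero_of_lt this]
  rw [hrestrict, Finset.sum_Ico_eq_sum_range]
  rw [show m + 1 - i = (m - i) + 1 by omega]
  have hterm : ∀ s ∈ Finset.range ((m-i)+1),
      (-1:ℝ)^(i+s) * (m.choose (i+s):ℝ) * aa (i+s) * (((i+s).choose i : ℝ) * (-y)^i)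
      = ((m.choose i : ℝ) * ((-y)^i * (-1:ℝ)^i)) *
          ((-1:ℝ)^s * ((m-i).choose s : ℝ) * aa (i+s)) := by
    intro s hs
    have hs' : s ≤ m - i := Nat.lt_succ_iff.mp (Finset.mem_range.mp hs)
    have hcm : (m.choose (i+s) : ℝ) * ((i+s).choose i : ℝ)
        = (m.choose i : ℝ) * ((m-i).choose s : ℝ) := by
      have h := Nat.choose_mul (n := m) (show i ≤ i + s by omega)
      rw [Nat.add_sub_cancel_left] at h
      exact_mod_cast h
    rw [pow_add]
    linear_combination ((-1:ℝ)^i * (-1:ℝ)^s * (-y)^i * aa (i+s)) * hcm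
  rw [Finset.sum_congr rfl hterm, ← Finset.mul_sum]
  have hS : ∑ s ∈ Finset.range ((m-i)+1), (-1:ℝ)^s * ((m-i).choose s : ℝ) * aa (i+s)
      = S (m-i) i := rfl
  rw [hS, S_eq (m-i) i, show (m - i) + i = m by omega]
  have hch : (0:ℝ) < (m.choose i : ℝ) := by exact_mod_cast Nat.choose_pos hi'
  have hy : (-y:ℝ)^i * (-1:ℝ)^i = y ^ i := by
    rw [← mul_pow]
    norm_num
  rw [hy]
  field_simp

lemma summable_norm_aa {x : ℝ} (hx : |x| < 1) : Summable (fun n => ‖aa n * x ^ n‖) := by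
  refine Summable.of_nonneg_of_le (fun n => norm_nonneg _) (fun n => ?_)
    (summable_geometric_of_lt_one (abs_nonneg x) hx)
  rw [Real.norm_eq_abs, abs_mul, abs_pow, abs_of_pos (aa_pos n)]
  calc aa n * |x| ^ n ≤ 1 * |x| ^ n := by
        have := aa_le_one n
        have h2 : (0:ℝ) ≤ |x| ^ n := by positivity
        nlinarith
    _ = |x| ^ n := one_mul _

lemma summable_aa {x : ℝ} (hx : |x| < 1) : Summable (fun n => aa n * x ^ n) :=
  (summable_norm_aa hx).of_norm

lemma summable_sec {x : ℝ} (hx : |x| < 1) :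
    Summable (fun n => aa (n+1) * (((n:ℝ)+1) * x ^ n)) := by
  have hsum : Summable (fun n : ℕ => ((n:ℝ)+1) * |x| ^ n) := by
    have h1 : Summable (fun n : ℕ => (n:ℝ) ^ 1 * |x| ^ n) :=
      summable_pow_mul_geometric_of_norm_lt_one 1 (by rwa [Real.norm_eq_abs, abs_abs])
    have h2 : Summable (fun n : ℕ => |x| ^ n) :=
      summable_geometric_of_lt_one (abs_nonneg x) hx
    have := h1.add h2
    refine this.congr fun n => ?_
    push_cast; ring
  refine Summable.of_norm (Summable.of_nonneg_of_le (fun n => norm_nonneg _) (fun n => ?_) hsum)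
  rw [Real.norm_eq_abs, abs_mul, abs_mul, abs_pow]
  have h0 : |aa (n+1)| ≤ 1 := by
    rw [abs_of_pos (aa_pos _)]; exact aa_le_one _
  have h1 : |((n:ℝ)+1)| = (n:ℝ)+1 := abs_of_pos (by positivity)
  rw [h1]
  have h2 : (0:ℝ) ≤ ((n:ℝ)+1) * |x| ^ n := by positivity
  nlinarith [abs_nonneg (aa (n+1)), pow_nonneg (abs_nonneg x) n]

lemma summable_der {x : ℝ} (hx : |x| < 1) :
    Summable (fun n => aa n * ((n:ℝ) * x ^ (n-1))) := by
  rw [← summable_nat_add_iff 1]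
  refine (summable_sec hx).congr fun n => ?_
  push_cast
  simp

lemma summable_nmul {x : ℝ} (hx : |x| < 1) :
    Summable (fun n : ℕ => (n:ℝ) * aa n * x ^ n) := by
  rw [← summable_nat_add_iff 1]
  have : Summable (fun n => x * (aa (n+1) * (((n:ℝ)+1) * x ^ n))) :=
    (summable_sec hx).mul_left x
  refine this.congr fun n => ?_
  push_cast
  ring

lemma tsum_der_shift {x : ℝ} (hx : |x| < 1) :
    ∑' n, aa n * ((n:ℝ) * x ^ (n-1)) = ∑' n, aa (n+1) * (((n:ℝ)+1) * x ^ n) := by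
  rw [Summable.tsum_eq_zero_add (summable_der hx)]
  push_cast
  simp

lemma hasDerivAt_g {x : ℝ} (hx : |x| < 1) :
    HasDerivAt (fun y => ∑' n, aa n * y ^ n) (∑' n, aa n * ((n:ℝ) * x ^ (n-1))) x := by
  set r : ℝ := (1 + |x|) / 2 with hr
  have hr0 : 0 < r := by positivity
  have hr1 : r < 1 := by rw [hr]; linarith
  have hxr : |x| < r := by rw [hr]; linarith
  have hu : Summable (fun n : ℕ => (((n:ℝ)+1) * r ^ n) / r) := by
    have h1 : Summable (fun n : ℕ => (n:ℝ) ^ 1 * r ^ n) :=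
      summable_pow_mul_geometric_of_norm_lt_one 1 (by rw [Real.norm_eq_abs, abs_of_pos hr0]; exact hr1)
    have h2 : Summable (fun n : ℕ => r ^ n) := summable_geometric_of_lt_one hr0.le hr1
    have := (h1.add h2).div_const r
    refine this.congr fun n => ?_
    push_cast; ring
  refine hasDerivAt_tsum_of_isPreconnected hu (isOpen_Ioo (a := -r) (b := r))
    (Convex.isPreconnected (convex_Ioo _ _))
    (fun n y _ => (hasDerivAt_pow n y).const_mul (aa n)) ?_ (Set.mem_Ioo.mpr ⟨by linarith, hr0⟩)
    (summable_aa (by rw [abs_zero]; linarith)) (Set.mem_Ioo.mpr ⟨by linarith [abs_lt.mp hxr], (abs_lt.mp hxr).2⟩)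
  intro n y hy
  have hyr : |y| ≤ r := by
    rcases Set.mem_Ioo.mp hy with ⟨h1, h2⟩
    rw [abs_le]; constructor <;> linarith
  match n with
  | 0 => simp; positivity
  | (s+1) =>
    rw [Real.norm_eq_abs, abs_mul, abs_mul, abs_pow]
    have e1 : |aa (s+1)| ≤ 1 := by rw [abs_of_pos (aa_pos _)]; exact aa_le_one _
    have e2 : |((s+1:ℕ):ℝ)| = (s:ℝ)+1 := by
      rw [abs_of_pos (by positivity)]; push_cast; ring
    have e3 : (s+1) - 1 = s := rfl
    rw [e2, e3]
    have e4 : |y| ^ s ≤ r ^ s := pow_le_pow_left₀ (abs_nonneg y) hyr s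
    have e5 : (((s:ℝ)+1+1) * r ^ (s+1)) / r = ((s:ℝ)+2) * r ^ s := by
      rw [pow_succ]
      field_simp
      ring
    push_cast
    rw [e5]
    have e6 : (0:ℝ) ≤ (s:ℝ)+1 := by positivity
    calc |aa (s+1)| * (((s:ℝ)+1) * |y| ^ s)
        ≤ 1 * (((s:ℝ)+1) * |y| ^ s) :=
          mul_le_mul_of_nonneg_right e1 (by positivity)
      _ = ((s:ℝ)+1) * |y| ^ s := one_mul _
      _ ≤ ((s:ℝ)+1) * r ^ s := mul_le_mul_of_nonneg_left e4 e6
      _ ≤ ((s:ℝ)+2) * r ^ s := mul_le_mul_of_nonneg_right (by linarith) (pow_nonneg hr0.le s)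

lemma ode {x : ℝ} (hx : |x| < 1) :
    2 * (1 - x) * (∑' n, aa n * ((n:ℝ) * x ^ (n-1))) = ∑' n, aa n * x ^ n := by
  rw [tsum_der_shift hx]
  set D := ∑' n, aa (n+1) * (((n:ℝ)+1) * x ^ n) with hD
  have hDs := summable_sec hx
  have hNs := summable_nmul hx
  have hxD : x * D = ∑' n : ℕ, (n:ℝ) * aa n * x ^ n := by
    rw [hD, ← tsum_mul_left]
    rw [Summable.tsum_eq_zero_add hNs]
    push_cast
    simp only [Nat.cast_zero, zero_mul, zero_add]
    refine tsum_congr fun n => ?_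
    ring
  have hsub : ∑' n, (2 * (aa (n+1) * (((n:ℝ)+1) * x ^ n)) - 2 * ((n:ℝ) * aa n * x ^ n))
      = 2 * D - 2 * (x * D) := by
    rw [Summable.tsum_sub (hDs.mul_left 2) (hNs.mul_left 2), tsum_mul_left, tsum_mul_left, hxD, hD]
  have hterm : ∀ n : ℕ, 2 * (aa (n+1) * (((n:ℝ)+1) * x ^ n)) - 2 * ((n:ℝ) * aa n * x ^ n)
      = aa n * x ^ n := by
    intro n
    have := aa_succ n
    have h2 : (2 * (n:ℝ) + 2) ≠ 0 := by positivity
    field_simp at this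
    linear_combination x ^ n * this
  rw [← tsum_congr hterm, hsub]
  ring

lemma hasSum_aa {x : ℝ} (hx0 : 0 ≤ x) (hx1 : x < 1) :
    HasSum (fun n => aa n * x ^ n) (1 / Real.sqrt (1 - x)) := by
  have habs : |x| < 1 := abs_lt.mpr ⟨by linarith, hx1⟩
  set g : ℝ → ℝ := fun y => ∑' n, aa n * y ^ n with hgdef
  have hg0 : g 0 = 1 := by
    rw [hgdef]
    simp only
    rw [tsum_eq_single 0 (fun n hn => by simp [zero_pow hn])]
    simp [aa_zero]
  have hgpos : ∀ y, 0 ≤ y → y < 1 → 1 ≤ g y := by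
    intro y hy0 hy1
    have habsy : |y| < 1 := abs_lt.mpr ⟨by linarith, hy1⟩
    have h1 : aa 0 * y ^ 0 ≤ g y := by
      refine Summable.le_tsum (summable_aa habsy) 0 fun j _ => ?_
      exact mul_nonneg (aa_pos j).le (pow_nonneg hy0 j)
    simpa [aa_zero] using h1
  have key : g x ^ 2 * (1 - x) = 1 := by
    rcases eq_or_lt_of_le hx0 with h | hxpos
    · rw [← h, hg0]; norm_num
    · set h : ℝ → ℝ := fun y => g y ^ 2 * (1 - y) with hhdef
      have hderiv : ∀ y, |y| < 1 → HasDerivAt h 0 y := by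
        intro y hy
        have hgd := hasDerivAt_g hy
        have hd : HasDerivAt h
            ((2 * g y ^ 1 * (∑' n, aa n * ((n:ℝ) * y ^ (n-1)))) * (1 - y) + g y ^ 2 * (0 - 1)) y := by
          exact (hgd.pow 2).mul ((hasDerivAt_const y (1:ℝ)).sub (hasDerivAt_id y))
        convert hd using 1
        have := ode hy
        have hgy : g y = ∑' n, aa n * y ^ n := rfl
        rw [← hgy] at this
        linear_combination (- g y) * this
      obtain ⟨c, hc, hc0⟩ := exists_hasDerivAt_eq_slope h (fun _ => 0) hxpos
        (fun y hy => by
          have hy1 : |y| < 1 := by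
            rcases Set.mem_Icc.mp hy with ⟨h1, h2⟩
            rw [abs_lt]; constructor <;> linarith
          exact (hderiv y hy1).continuousAt.continuousWithinAt)
        (fun y hy => by
          have hy1 : |y| < 1 := by
            rcases Set.mem_Ioo.mp hy with ⟨h1, h2⟩
            rw [abs_lt]; constructor <;> linarith
          exact hderiv y hy1)
      have : h x = h 0 := by
        have hx0' : x - 0 ≠ 0 := sub_ne_zero.mpr (ne_of_gt hxpos)
        rcases div_eq_zero_iff.mp hc0.symm with h1 | h1
        · linarith [sub_eq_zero.mp h1]
        · exact absurd h1 hx0'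
      rw [hhdef] at this
      simp only at this
      rw [this, hg0]
      norm_num
  have h1x : (0:ℝ) < 1 - x := by linarith
  have hs0 : (0:ℝ) < Real.sqrt (1 - x) := Real.sqrt_pos.mpr h1x
  have hgx : 1 ≤ g x := hgpos x hx0 hx1
  have ht : Real.sqrt (1 - x) * g x = 1 := by
    set t := Real.sqrt (1 - x) * g x with htdef
    have ht2 : t ^ 2 = 1 := by
      rw [htdef, mul_pow, Real.sq_sqrt h1x.le]
      nlinarith [key]
    have htpos : 0 < t := by
      rw [htdef]; nlinarith
    have : (t - 1) * (t + 1) = 0 := by nlinarith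
    rcases mul_eq_zero.mp this with h | h
    · linarith
    · linarith
  have hgval : g x = 1 / Real.sqrt (1 - x) := by
    field_simp
    linarith [ht]
  have := (summable_aa habs).hasSum
  rwa [show ∑' n, aa n * x ^ n = g x from rfl, hgval] at this

noncomputable def cc (k : ℝ) (m : ℕ) : ℝ :=
  ∑ i ∈ Finset.range (m+1), aa i * aa (m-i) * (k^2)^(m-i)

lemma cc_nonneg (k : ℝ) (m : ℕ) : 0 ≤ cc k m := by
  refine Finset.sum_nonneg fun i _ => ?_
  have := aa_pos i
  have := aa_pos (m-i)
  positivity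

lemma cc_le (k : ℝ) (hk : k^2 ≤ 1) (hk0 : 0 ≤ k) (m : ℕ) : cc k m ≤ (m:ℝ) + 1 := by
  have hterm : ∀ i ∈ Finset.range (m+1), aa i * aa (m-i) * (k^2)^(m-i) ≤ 1 := by
    intro i _
    have h1 := aa_pos i
    have h2 := aa_pos (m-i)
    have h3 := aa_le_one i
    have h4 := aa_le_one (m-i)
    have h5 : (0:ℝ) ≤ k^2 := sq_nonneg k
    have h6 : (k^2)^(m-i) ≤ 1 := pow_le_one₀ h5 hk
    have h7 : (0:ℝ) ≤ (k^2)^(m-i) := pow_nonneg h5 _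
    have h8 : aa i * aa (m-i) ≤ 1 := by nlinarith
    nlinarith [mul_le_mul h8 h6 h7 (by norm_num : (0:ℝ) ≤ 1)]
  calc cc k m ≤ ∑ _i ∈ Finset.range (m+1), (1:ℝ) := Finset.sum_le_sum hterm
    _ = (m:ℝ) + 1 := by simp

lemma hasSum_c {k : ℝ} (hk0 : 0 < k) (hk1 : k < 1) {t : ℝ} (ht0 : 0 ≤ t) (ht1 : t < 1) :
    HasSum (fun m : ℕ => cc k m * t^(2*m))
      (1 / Real.sqrt ((1 - t^2) * (1 - k^2 * t^2))) := by
  have ht2 : t^2 < 1 := by nlinarith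
  have ht2' : (0:ℝ) ≤ t^2 := sq_nonneg t
  have habs1 : |t^2| < 1 := by rw [abs_of_nonneg ht2']; exact ht2
  have hkt : k^2 * t^2 < 1 := by nlinarith
  have hkt' : (0:ℝ) ≤ k^2 * t^2 := by positivity
  have habs2 : |k^2 * t^2| < 1 := by rw [abs_of_nonneg hkt']; exact hkt
  have h1 := hasSum_aa ht2' ht2
  have h2 := hasSum_aa hkt' hkt
  have hn1 := summable_norm_aa habs1
  have hn2 := summable_norm_aa habs2
  have hmain := hasSum_sum_range_mul_of_summable_norm hn1 hn2
  rw [h1.tsum_eq, h2.tsum_eq] at hmain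
  have hval : 1 / Real.sqrt (1 - t^2) * (1 / Real.sqrt (1 - k^2*t^2))
      = 1 / Real.sqrt ((1 - t^2) * (1 - k^2 * t^2)) := by
    rw [Real.sqrt_mul (by linarith : (0:ℝ) ≤ 1 - t^2)]
    rw [one_div_mul_one_div]
  rw [hval] at hmain
  refine hmain.congr_fun fun m => ?_
  rw [cc, Finset.sum_mul]
  refine Finset.sum_congr rfl fun i hi => ?_
  have hi' : i ≤ m := Nat.lt_succ_iff.mp (Finset.mem_range.mp hi)
  have hpow : (t^2)^i * (t^2)^(m-i) = t^(2*m) := by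
    rw [← pow_add, show i + (m - i) = m by omega, ← pow_mul]
  rw [mul_pow]
  calc aa i * aa (m-i) * (k^2)^(m-i) * t^(2*m)
      = aa i * aa (m-i) * (k^2)^(m-i) * ((t^2)^i * (t^2)^(m-i)) := by rw [hpow]
    _ = aa i * (t^2)^i * (aa (m-i) * ((k^2)^(m-i) * (t^2)^(m-i))) := by ring

end Stmt10

open Stmt10 MeasureTheory in
theorem stmt10 (l k : ℝ) (hl0 : 0 < l) (hl1 : l < 1) (hk0 : 0 < k) (hk1 : k < 1) :
    HasSum (fun m : ℕ => l ^ (2 * m + 1) / (2 * (m : ℝ) + 1) * F2F1 m (1 - k ^ 2))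
      (∫ t in (0:ℝ)..l, 1 / Real.sqrt ((1 - t ^ 2) * (1 - k ^ 2 * t ^ 2))) := by
  have hck : ∀ m, F2F1 m (1 - k^2) = cc k m := by
    intro m
    rw [F2F1_eq m (k^2)]
    rfl
  have hl2 : l^2 < 1 := by nlinarith
  have hk2 : k^2 ≤ 1 := by nlinarith
  -- summability of the bound
  have hbsum : Summable (fun m : ℕ => ((m:ℝ)+1) * l^(2*m) * l) := by
    have h1 : Summable (fun m : ℕ => (m:ℝ)^1 * (l^2)^m) :=
      summable_pow_mul_geometric_of_norm_lt_one 1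
        (by rw [Real.norm_eq_abs, abs_of_nonneg (sq_nonneg l)]; exact hl2)
    have h2 : Summable (fun m : ℕ => (l^2)^m) :=
      summable_geometric_of_lt_one (sq_nonneg l) hl2
    have := ((h1.add h2).mul_right l)
    refine this.congr fun m => ?_
    rw [← pow_mul]
    push_cast
    ring_nf
  -- summability of the target
  have htarget_sum : Summable (fun m : ℕ => cc k m * (l^(2*m+1) / (2*(m:ℝ)+1))) := by
    refine Summable.of_nonneg_of_le (fun m => ?_) (fun m => ?_) hbsum
    · have h1 := cc_nonneg k m
      have h2 : (0:ℝ) ≤ l^(2*m+1) := by positivity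
      have h3 : (0:ℝ) < 2*(m:ℝ)+1 := by positivity
      positivity
    · have h1 : l^(2*m+1) / (2*(m:ℝ)+1) ≤ l^(2*m+1) := by
        apply div_le_self (by positivity) (by push_cast; linarith [Nat.cast_nonneg (α := ℝ) m])
      have h2 := cc_le k hk2 hk0.le m
      have h3 := cc_nonneg k m
      have h4 : (0:ℝ) ≤ l^(2*m+1) := by positivity
      have h5 : (0:ℝ) ≤ l^(2*m+1) / (2*(m:ℝ)+1) := by positivity
      calc cc k m * (l^(2*m+1)/(2*(m:ℝ)+1)) ≤ ((m:ℝ)+1) * (l^(2*m+1)/(2*(m:ℝ)+1)) :=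
            mul_le_mul_of_nonneg_right h2 h5
        _ ≤ ((m:ℝ)+1) * l^(2*m+1) := mul_le_mul_of_nonneg_left h1 (by positivity)
        _ = ((m:ℝ)+1) * l^(2*m) * l := by rw [pow_succ]; ring
  -- pointwise identity on Ioc
  have hpt : ∀ t ∈ Set.Ioc (0:ℝ) l, (fun t => 1 / Real.sqrt ((1 - t^2) * (1 - k^2 * t^2))) t
      = ∑' m, cc k m * t^(2*m) := by
    intro t ht
    rcases Set.mem_Ioc.mp ht with ⟨h1, h2⟩
    exact ((hasSum_c hk0 hk1 (le_of_lt h1) (lt_of_le_of_lt h2 hl1)).tsum_eq).symm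
  -- lintegral bound
  have hlint : ∀ m : ℕ, ∫⁻ t in Set.Ioc (0:ℝ) l, ‖cc k m * t^(2*m)‖₊ ∂volume
      ≤ ENNReal.ofReal (((m:ℝ)+1) * l^(2*m) * l) := by
    intro m
    have hb : ∀ t ∈ Set.Ioc (0:ℝ) l, (‖cc k m * t^(2*m)‖₊ : ENNReal)
        ≤ ENNReal.ofReal (((m:ℝ)+1) * l^(2*m)) := by
      intro t ht
      rcases Set.mem_Ioc.mp ht with ⟨h1, h2⟩
      have hccn := cc_nonneg k m
      have htp : (0:ℝ) ≤ t^(2*m) := by positivity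
      have hnn : (0:ℝ) ≤ cc k m * t^(2*m) := mul_nonneg hccn htp
      rw [← enorm_eq_nnnorm, Real.enorm_eq_ofReal hnn]
      apply ENNReal.ofReal_le_ofReal
      have hle : t^(2*m) ≤ l^(2*m) := pow_le_pow_left₀ h1.le h2 _
      have hcl := cc_le k hk2 hk0.le m
      have hlp : (0:ℝ) ≤ l^(2*m) := by positivity
      nlinarith
    calc ∫⁻ t in Set.Ioc (0:ℝ) l, ‖cc k m * t^(2*m)‖₊ ∂volume
        ≤ ∫⁻ _t in Set.Ioc (0:ℝ) l, ENNReal.ofReal (((m:ℝ)+1) * l^(2*m)) ∂volume :=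
          setLIntegral_mono measurable_const hb
      _ = ENNReal.ofReal (((m:ℝ)+1) * l^(2*m)) * volume (Set.Ioc (0:ℝ) l) :=
          setLIntegral_const _ _
      _ = ENNReal.ofReal (((m:ℝ)+1) * l^(2*m) * l) := by
          rw [Real.volume_Ioc, ← ENNReal.ofReal_mul (by positivity)]
          norm_num
  have hne : ∑' m : ℕ, ∫⁻ t in Set.Ioc (0:ℝ) l, ‖cc k m * t^(2*m)‖₊ ∂volume ≠ ⊤ := by
    refine ne_top_of_le_ne_top ?_ (ENNReal.tsum_le_tsum hlint)
    rw [← ENNReal.ofReal_tsum_of_nonneg (fun m => by positivity) hbsum]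
    exact ENNReal.ofReal_ne_top
  have hmeas : ∀ m : ℕ, AEStronglyMeasurable (fun t : ℝ => cc k m * t^(2*m))
      (volume.restrict (Set.Ioc 0 l)) :=
    fun m => (continuous_const.mul (continuous_pow (2*m))).aestronglyMeasurable
  have hint : ∀ m : ℕ, ∫ t in Set.Ioc (0:ℝ) l, cc k m * t^(2*m)
      = cc k m * (l^(2*m+1)/(2*(m:ℝ)+1)) := by
    intro m
    rw [← intervalIntegral.integral_of_le hl0.le, intervalIntegral.integral_const_mul,
      integral_pow]
    have : (0:ℝ)^(2*m+1) = 0 := zero_pow (by omega)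
    rw [this]
    push_cast
    ring_nf
  have hfinal : ∫ t in (0:ℝ)..l, 1 / Real.sqrt ((1-t^2)*(1-k^2*t^2))
      = ∑' m : ℕ, cc k m * (l^(2*m+1)/(2*(m:ℝ)+1)) := by
    rw [intervalIntegral.integral_of_le hl0.le]
    rw [setIntegral_congr_fun measurableSet_Ioc hpt]
    rw [integral_tsum hmeas hne]
    exact tsum_congr hint
  have heq : (fun m : ℕ => l^(2*m+1) / (2*(m:ℝ)+1) * F2F1 m (1-k^2))
      = fun m : ℕ => cc k m * (l^(2*m+1)/(2*(m:ℝ)+1)) := by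
    funext m
    rw [hck m]
    ring
  rw [show (1:ℝ) - k^2 = 1 - k^2 from rfl]
  rw [heq, hfinal]
  exact htarget_sum.hasSum
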